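/- arXiv:2105.13287 — 2 statements merged into one kernel-verified Lean document; each statement's English description precedes it below -/
import Mathlib

section
/- Let ε' > 0 and P ∈ [0,1) with P · exp(ε') ≤ exp(-1). Then (1 - P)/(1 - exp(ε')·P) ≤ exp((exp(ε') - 1)·P/(1 - exp(-1))). -/
theorem survival_ratio_le_exp (ε' P : ℝ) (hε : 0 < ε') (hP0 : 0 ≤ P) (hP1 : P < 1)
    (h : P * Real.exp ε' ≤ Real.exp (-1)) :
    (1 - P) / (1 - Real.exp ε' * P)
      ≤ Real.exp ((Real.exp ε' - 1) * P / (1 - Real.exp (-1))) := by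
  set A := Real.exp ε' with hAdef
  have hA : 1 < A := by
    have := Real.add_one_le_exp ε'
    linarith
  have he1 : Real.exp (-1) < 1 := by
    have := Real.exp_lt_one_iff.mpr (by norm_num : (-1:ℝ) < 0)
    exact this
  have he0 : 0 < Real.exp (-1) := Real.exp_pos _
  have hAP : A * P ≤ Real.exp (-1) := by linarith [mul_comm P A]
  have hd : 0 < 1 - A * P := by linarith
  have hc : 0 < 1 - Real.exp (-1) := by linarith
  have hcd : 1 - Real.exp (-1) ≤ 1 - A * P := by linarith
  have hnum : 0 ≤ (A - 1) * P := mul_nonneg (by linarith) hP0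
  have key : (1 - P) / (1 - A * P) ≤ 1 + (A - 1) * P / (1 - Real.exp (-1)) := by
    rw [div_le_iff₀ hd]
    have h1 : (A - 1) * P ≤ (A - 1) * P / (1 - Real.exp (-1)) * (1 - A * P) := by
      rw [div_mul_eq_mul_div, le_div_iff₀ hc]
      exact mul_le_mul_of_nonneg_left hcd hnum
    nlinarith
  calc (1 - P) / (1 - A * P) ≤ 1 + (A - 1) * P / (1 - Real.exp (-1)) := key
    _ ≤ Real.exp ((A - 1) * P / (1 - Real.exp (-1))) := by
        have := Real.add_one_le_exp ((A - 1) * P / (1 - Real.exp (-1)))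
        linarith
end

section
/- Let ε' ∈ (0,1] and P_u, P_v ∈ [0,1) each satisfying P·exp(ε') ≤ exp(-1). Let p = P_u + P_v - P_u·P_v. Then ((1-P_u)/(1-exp(ε')P_u)) · ((1-P_v)/(1-exp(ε')P_v)) ≤ exp(4ε'·p/(1 - exp(-1))). -/
private lemma exp_le_one_add_two (x : ℝ) (h0 : 0 ≤ x) (h1 : x ≤ 1) :
    Real.exp x ≤ 1 + 2 * x := by
  have hconv := convexOn_exp.2 (Set.mem_univ (0:ℝ)) (Set.mem_univ (1:ℝ))
    (show (0:ℝ) ≤ 1 - x by linarith) h0 (by ring)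
  simp only [smul_eq_mul, mul_zero, mul_one, zero_add, Real.exp_zero] at hconv
  have he : Real.exp 1 ≤ 3 := le_of_lt (by
    calc Real.exp 1 < 2.7182818286 := Real.exp_one_lt_d9
    _ ≤ 3 := by norm_num)
  nlinarith [hconv]

private lemma factor_le (ε' P : ℝ) (hε0 : 0 < ε') (hε1 : ε' ≤ 1)
    (hP0 : 0 ≤ P) (hP1 : P < 1) (h : P * Real.exp ε' ≤ Real.exp (-1)) :
    (1 - P) / (1 - Real.exp ε' * P) ≤ Real.exp (2 * ε' * P / (1 - Real.exp (-1))) := by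
  have hE1 : (1:ℝ) ≤ Real.exp ε' := Real.one_le_exp hε0.le
  have hinv : Real.exp (-1) < 1 := by
    rw [Real.exp_lt_one_iff]; norm_num
  have hD : 1 - Real.exp (-1) ≤ 1 - Real.exp ε' * P := by
    have : Real.exp ε' * P ≤ Real.exp (-1) := by linarith [h, mul_comm P (Real.exp ε')]
    linarith
  have hDpos : 0 < 1 - Real.exp ε' * P := lt_of_lt_of_le (by linarith) hD
  have hden : 0 < 1 - Real.exp (-1) := by linarith
  have hEb : Real.exp ε' ≤ 1 + 2 * ε' := exp_le_one_add_two ε' hε0.le hε1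
  have key : (1 - P) / (1 - Real.exp ε' * P) ≤ 1 + 2 * ε' * P / (1 - Real.exp (-1)) := by
    rw [div_le_iff₀ hDpos]
    have h1 : 2 * ε' * P / (1 - Real.exp (-1)) * (1 - Real.exp ε' * P)
        ≥ 2 * ε' * P / (1 - Real.exp (-1)) * (1 - Real.exp (-1)) := by
      apply mul_le_mul_of_nonneg_left hD
      positivity
    rw [div_mul_cancel₀ _ (ne_of_gt hden)] at h1
    nlinarith [mul_nonneg hP0 (sub_nonneg.mpr hEb), mul_nonneg hε0.le hP0]
  calc (1 - P) / (1 - Real.exp ε' * P) ≤ 1 + 2 * ε' * P / (1 - Real.exp (-1)) := key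
    _ ≤ Real.exp (2 * ε' * P / (1 - Real.exp (-1))) := by
        linarith [Real.add_one_le_exp (2 * ε' * P / (1 - Real.exp (-1)))]

theorem survival_ratio_prod_le_exp (ε' Pu Pv : ℝ) (hε0 : 0 < ε') (hε1 : ε' ≤ 1)
    (hPu0 : 0 ≤ Pu) (hPu1 : Pu < 1) (hPv0 : 0 ≤ Pv) (hPv1 : Pv < 1)
    (hu : Pu * Real.exp ε' ≤ Real.exp (-1)) (hv : Pv * Real.exp ε' ≤ Real.exp (-1)) :
    ((1 - Pu) / (1 - Real.exp ε' * Pu)) * ((1 - Pv) / (1 - Real.exp ε' * Pv))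
      ≤ Real.exp (4 * ε' * (Pu + Pv - Pu * Pv) / (1 - Real.exp (-1))) := by
  have hinv : Real.exp (-1) < 1 := by rw [Real.exp_lt_one_iff]; norm_num
  have hden : 0 < 1 - Real.exp (-1) := by linarith
  have hE1 : (1:ℝ) ≤ Real.exp ε' := Real.one_le_exp hε0.le
  have hDu : 0 < 1 - Real.exp ε' * Pu := by
    have : Real.exp ε' * Pu ≤ Real.exp (-1) := by linarith [mul_comm Pu (Real.exp ε')]
    linarith
  have hu' := factor_le ε' Pu hε0 hε1 hPu0 hPu1 hu
  have hv' := factor_le ε' Pv hε0 hε1 hPv0 hPv1 hv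
  have h1 : ((1 - Pu) / (1 - Real.exp ε' * Pu)) * ((1 - Pv) / (1 - Real.exp ε' * Pv))
      ≤ Real.exp (2 * ε' * Pu / (1 - Real.exp (-1))) * Real.exp (2 * ε' * Pv / (1 - Real.exp (-1))) :=
    mul_le_mul hu' hv' (div_nonneg (by linarith)
      (by
        have : Real.exp ε' * Pv ≤ Real.exp (-1) := by linarith [mul_comm Pv (Real.exp ε')]
        linarith)) (Real.exp_nonneg _)
  rw [← Real.exp_add] at h1
  refine h1.trans (Real.exp_le_exp.mpr ?_)
  rw [← add_div, div_le_div_iff₀ hden hden]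
  nlinarith [mul_nonneg hε0.le (mul_nonneg hPu0 (sub_nonneg.mpr hPv1.le)),
    mul_nonneg hε0.le (mul_nonneg hPv0 (sub_nonneg.mpr hPu1.le))]
end
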